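/- Let w : ℝ × ℝ → ℝ be smooth (C^∞) on [0,∞) × [0,1] and satisfy the viscous Burgers equation ∂_t w(t,x) = ∂_{xx} w(t,x) − w(t,x) ∂_x w(t,x) for all t ≥ 0 and x ∈ [0,1], together with the Dirichlet boundary conditions w(t,0) = w(t,1) = 0 for all t ≥ 0. Then for every t ≥ 0, ∫₀¹ w(t,x)² dx ≤ e^{-2t} ∫₀¹ w(0,x)² dx. In particular every trajectory converges to the zero equilibrium exponentially fast in the L²(0,1)-norm. -/

import Mathlib

open Set MeasureTheory intervalIntegral Topology Filter Metric

lemma poincare_aux {u v : ℝ → ℝ} (hu : ContinuousOn u (Set.Icc 0 1))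
    (hv : ContinuousOn v (Set.Icc 0 1))
    (hd : ∀ x ∈ Set.Ioo (0:ℝ) 1, HasDerivAt u (v x) x) (hu0 : u 0 = 0) :
    ∫ x in (0:ℝ)..1, (u x)^2 ≤ ∫ x in (0:ℝ)..1, (v x)^2 := by
  have h01 : (0:ℝ) ≤ 1 := zero_le_one
  have hvint : IntervalIntegrable v volume 0 1 :=
    ContinuousOn.intervalIntegrable_of_Icc h01 hv
  have habs : IntervalIntegrable (fun y => |v y|) volume 0 1 :=
    ContinuousOn.intervalIntegrable_of_Icc h01 hv.abs
  have hv2 : IntervalIntegrable (fun y => (v y)^2) volume 0 1 :=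
    ContinuousOn.intervalIntegrable_of_Icc h01 (hv.pow 2)
  have hu2 : IntervalIntegrable (fun y => (u y)^2) volume 0 1 :=
    ContinuousOn.intervalIntegrable_of_Icc h01 (hu.pow 2)
  have key : ∀ x ∈ Set.Icc (0:ℝ) 1, u x = ∫ y in (0:ℝ)..x, v y := by
    intro x hx
    have hsub : Set.uIcc (0:ℝ) x ⊆ Set.uIcc (0:ℝ) 1 := by
      rw [Set.uIcc_of_le hx.1, Set.uIcc_of_le h01]
      exact Set.Icc_subset_Icc le_rfl hx.2
    have := integral_eq_sub_of_hasDeriv_right_of_le hx.1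
      (hu.mono (Set.Icc_subset_Icc le_rfl hx.2))
      (fun y hy => (hd y ⟨hy.1, lt_of_lt_of_le hy.2 hx.2⟩).hasDerivWithinAt)
      (hvint.mono_set hsub)
    rw [this, hu0, sub_zero]
  set c : ℝ := ∫ y in (0:ℝ)..1, |v y| with hc
  have hc0 : 0 ≤ c := intervalIntegral.integral_nonneg h01 (fun y _ => abs_nonneg _)
  have hbound : ∀ x ∈ Set.Icc (0:ℝ) 1, |u x| ≤ c := by
    intro x hx
    rw [key x hx]
    have h1 : |∫ y in (0:ℝ)..x, v y| ≤ ∫ y in (0:ℝ)..x, |v y| :=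
      intervalIntegral.abs_integral_le_integral_abs hx.1
    have hsub : Set.uIcc (0:ℝ) x ⊆ Set.uIcc (0:ℝ) 1 := by
      rw [Set.uIcc_of_le hx.1, Set.uIcc_of_le h01]
      exact Set.Icc_subset_Icc le_rfl hx.2
    have hsub2 : Set.uIcc x (1:ℝ) ⊆ Set.uIcc (0:ℝ) 1 := by
      rw [Set.uIcc_of_le hx.2, Set.uIcc_of_le h01]
      exact Set.Icc_subset_Icc hx.1 le_rfl
    have h2 : (∫ y in (0:ℝ)..x, |v y|) ≤ c := by
      have hsplit : (∫ y in (0:ℝ)..x, |v y|) + (∫ y in x..(1:ℝ), |v y|) = c :=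
        intervalIntegral.integral_add_adjacent_intervals (habs.mono_set hsub)
          (habs.mono_set hsub2)
      have h3 : 0 ≤ ∫ y in x..(1:ℝ), |v y| :=
        intervalIntegral.integral_nonneg hx.2 (fun y _ => abs_nonneg _)
      linarith
    exact h1.trans h2
  have hCS : c^2 ≤ ∫ y in (0:ℝ)..1, (v y)^2 := by
    have pos : 0 ≤ ∫ y in (0:ℝ)..1, (|v y| - c)^2 :=
      intervalIntegral.integral_nonneg h01 (fun y _ => sq_nonneg _)
    have expand : ∫ y in (0:ℝ)..1, (|v y| - c)^2
        = (∫ y in (0:ℝ)..1, (v y)^2) - 2*c*c + c^2 := by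
      have e : ∀ y, (|v y| - c)^2 = (v y)^2 - (2*c) * |v y| + c^2 := by
        intro y
        have : |v y|^2 = (v y)^2 := sq_abs _
        nlinarith [this]
      simp_rw [e]
      rw [intervalIntegral.integral_add (hv2.sub (habs.const_mul _))
          intervalIntegrable_const,
        intervalIntegral.integral_sub hv2 (habs.const_mul _),
        intervalIntegral.integral_const_mul, intervalIntegral.integral_const]
      simp [hc]
    nlinarith [pos, expand]
  have h1 : (∫ x in (0:ℝ)..1, (u x)^2) ≤ ∫ x in (0:ℝ)..1, c^2 := by
    apply intervalIntegral.integral_mono_on h01 hu2 intervalIntegrable_const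
    intro x hx
    have h := pow_le_pow_left₀ (abs_nonneg (u x)) (hbound x hx) 2
    rwa [sq_abs] at h
  have h2 : (∫ x in (0:ℝ)..1, c^2) = c^2 := by simp
  linarith

lemma ibp_aux {u v v2 : ℝ → ℝ} (hu : ContinuousOn u (Set.Icc 0 1))
    (hv : ContinuousOn v (Set.Icc 0 1)) (hv2c : ContinuousOn v2 (Set.Icc 0 1))
    (hdu : ∀ x ∈ Set.Ioo (0:ℝ) 1, HasDerivAt u (v x) x)
    (hdv : ∀ x ∈ Set.Ioo (0:ℝ) 1, HasDerivAt v (v2 x) x)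
    (hu0 : u 0 = 0) (hu1 : u 1 = 0) :
    ∫ x in (0:ℝ)..1, u x * (v2 x - u x * v x) = -∫ x in (0:ℝ)..1, (v x)^2 := by
  have h01 : (0:ℝ) ≤ 1 := zero_le_one
  have hA : IntervalIntegrable (fun x => v x * v x + u x * v2 x) volume 0 1 :=
    ContinuousOn.intervalIntegrable_of_Icc h01 ((hv.mul hv).add (hu.mul hv2c))
  have hB : IntervalIntegrable (fun x => (v x)^2) volume 0 1 :=
    ContinuousOn.intervalIntegrable_of_Icc h01 (hv.pow 2)
  have hC : IntervalIntegrable (fun x => (u x)^2 * v x) volume 0 1 :=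
    ContinuousOn.intervalIntegrable_of_Icc h01 ((hu.pow 2).mul hv)
  have h1 : ∫ x in (0:ℝ)..1, (v x * v x + u x * v2 x) = 0 := by
    have := integral_eq_sub_of_hasDeriv_right_of_le h01 (hu.mul hv)
      (fun x hx => ((hdu x hx).mul (hdv x hx)).hasDerivWithinAt) hA
    rw [this, Pi.mul_apply, Pi.mul_apply, hu0, hu1, zero_mul, zero_mul, sub_zero]
  have h2 : ∫ x in (0:ℝ)..1, (u x)^2 * v x = 0 := by
    have hg : ∀ x ∈ Set.Ioo (0:ℝ) 1,
        HasDerivWithinAt (fun x => (u x)^3 / 3) ((u x)^2 * v x) (Set.Ioi x) x := by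
      intro x hx
      have h := ((hdu x hx).pow 3).div_const (3:ℝ)
      have he : ((3:ℕ):ℝ) * u x ^ (3-1) * v x / 3 = (u x)^2 * v x := by
        norm_num; ring
      rw [he] at h
      exact h.hasDerivWithinAt
    have := integral_eq_sub_of_hasDeriv_right_of_le h01 ((hu.pow 3).div_const 3) hg hC
    rw [this, Pi.pow_apply, Pi.pow_apply, hu0, hu1]
    norm_num
  have e : (fun x => u x * (v2 x - u x * v x))
      = fun x => (v x * v x + u x * v2 x) - (v x)^2 - (u x)^2 * v x := by
    funext x; ring
  rw [e, intervalIntegral.integral_sub (hA.sub hB) hC,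
    intervalIntegral.integral_sub hA hB, h1, h2]
  ring

lemma slice_ineq {u gt : ℝ → ℝ} (huC : ContDiffOn ℝ (⊤:ℕ∞) u (Set.Icc 0 1))
    (hg : ∀ x ∈ Set.Ioo (0:ℝ) 1, gt x = deriv (deriv u) x - u x * deriv u x)
    (hu0 : u 0 = 0) (hu1 : u 1 = 0) :
    (∫ x in (0:ℝ)..1, 2 * u x * gt x) ≤ -2 * ∫ x in (0:ℝ)..1, (u x)^2 := by
  have hIccU : UniqueDiffOn ℝ (Set.Icc (0:ℝ) 1) := uniqueDiffOn_Icc zero_lt_one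
  set v : ℝ → ℝ := derivWithin u (Set.Icc 0 1) with hv_def
  set v2 : ℝ → ℝ := derivWithin v (Set.Icc 0 1) with hv2_def
  have hvC : ContDiffOn ℝ (⊤:ℕ∞) v (Set.Icc 0 1) :=
    huC.derivWithin hIccU (by simp)
  have hv2C : ContDiffOn ℝ (⊤:ℕ∞) v2 (Set.Icc 0 1) :=
    hvC.derivWithin hIccU (by simp)
  have hderiv_gen : ∀ (f : ℝ → ℝ), ContDiffOn ℝ (⊤:ℕ∞) f (Set.Icc 0 1) →
      ∀ x ∈ Set.Ioo (0:ℝ) 1, HasDerivAt f (derivWithin f (Set.Icc 0 1) x) x := by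
    intro f hf x hx
    have hnb : Set.Icc (0:ℝ) 1 ∈ 𝓝 x := Icc_mem_nhds hx.1 hx.2
    have hd : DifferentiableWithinAt ℝ f (Set.Icc 0 1) x :=
      (hf.differentiableOn (by simp)) x (Set.Ioo_subset_Icc_self hx)
    have hda : DifferentiableAt ℝ f x := hd.differentiableAt hnb
    have h := hda.hasDerivAt
    rwa [show derivWithin f (Set.Icc (0:ℝ) 1) x = deriv f x from
      derivWithin_of_mem_nhds hnb]
  have hdu : ∀ x ∈ Set.Ioo (0:ℝ) 1, HasDerivAt u (v x) x := hderiv_gen u huC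
  have hdv : ∀ x ∈ Set.Ioo (0:ℝ) 1, HasDerivAt v (v2 x) x := hderiv_gen v hvC
  have hg' : ∀ x ∈ Set.Ioo (0:ℝ) 1, gt x = v2 x - u x * v x := by
    intro x hx
    have h2 : deriv u x = v x := (hdu x hx).deriv
    have hev : deriv u =ᶠ[𝓝 x] v := by
      filter_upwards [Ioo_mem_nhds hx.1 hx.2] with y hy
      exact (hdu y hy).deriv
    have h3 : deriv (deriv u) x = v2 x := by
      rw [hev.deriv_eq]; exact (hdv x hx).deriv
    rw [hg x hx, h2, h3]
  have hucont := huC.continuousOn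
  have hvcont := hvC.continuousOn
  have hv2cont := hv2C.continuousOn
  have hibp := ibp_aux hucont hvcont hv2cont hdu hdv hu0 hu1
  have hpoin := poincare_aux hucont hvcont hdu hu0
  have hcongr : (∫ x in (0:ℝ)..1, 2 * u x * gt x)
      = ∫ x in (0:ℝ)..1, 2 * (u x * (v2 x - u x * v x)) := by
    apply intervalIntegral.integral_congr_ae
    have hae : ∀ᵐ x : ℝ ∂volume, x ≠ 1 := by
      have h0 : (volume : Measure ℝ) {(1:ℝ)} = 0 := measure_singleton 1
      have := measure_eq_zero_iff_ae_notMem.mp h0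
      simpa using this
    filter_upwards [hae] with x hx1 hxI
    rw [Set.uIoc_of_le (zero_le_one' ℝ)] at hxI
    have hxo : x ∈ Set.Ioo (0:ℝ) 1 := ⟨hxI.1, lt_of_le_of_ne hxI.2 hx1⟩
    rw [hg' x hxo]; ring
  rw [hcongr, intervalIntegral.integral_const_mul, hibp]
  have := hpoin
  linarith

/-- For a smooth solution `w` of the viscous Burgers equation on `[0,∞) × [0,1]`
with zero Dirichlet boundary conditions, the `L²(0,1)` energy decays exponentially:
`∫₀¹ w(t,x)² dx ≤ e^{-2t} ∫₀¹ w(0,x)² dx` for all `t ≥ 0`. -/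
theorem burgers_exponential_decay (w : ℝ × ℝ → ℝ)
    (hsmooth : ContDiffOn ℝ (⊤ : ℕ∞) w (Set.Ici (0:ℝ) ×ˢ Set.Icc (0:ℝ) 1))
    (heq : ∀ t ≥ (0:ℝ), ∀ x ∈ Set.Icc (0:ℝ) 1,
      deriv (fun s => w (s, x)) t =
        deriv (deriv (fun y => w (t, y))) x - w (t, x) * deriv (fun y => w (t, y)) x)
    (hbc0 : ∀ t ≥ (0:ℝ), w (t, 0) = 0)
    (hbc1 : ∀ t ≥ (0:ℝ), w (t, 1) = 0) :
    ∀ t ≥ (0:ℝ),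
      ∫ x in (0:ℝ)..1, (w (t, x)) ^ 2 ≤
        Real.exp (-2 * t) * ∫ x in (0:ℝ)..1, (w (0, x)) ^ 2 := by
  have h01 : (0:ℝ) ≤ 1 := zero_le_one
  set S : Set (ℝ × ℝ) := Set.Ici (0:ℝ) ×ˢ Set.Icc (0:ℝ) 1 with hS_def
  have hwc : ContinuousOn w S := hsmooth.continuousOn
  have hintS : interior S = Set.Ioi (0:ℝ) ×ˢ Set.Ioo (0:ℝ) 1 := by
    rw [hS_def, interior_prod_eq, interior_Ici, interior_Icc]
  have hSuniq : UniqueDiffOn ℝ S := by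
    apply uniqueDiffOn_convex ((convex_Ici 0).prod (convex_Icc 0 1))
    rw [hintS]
    exact ⟨(1, 1/2), by norm_num⟩
  -- the time-derivative of w, as a continuous function on S
  set g : ℝ × ℝ → ℝ := fun p => fderivWithin ℝ w S p (1, 0) with hg_def
  have hgc : ContinuousOn g S := by
    have h := hsmooth.continuousOn_fderivWithin hSuniq (by simp)
    exact h.clm_apply continuousOn_const
  have hDA : ∀ p ∈ interior S, HasDerivAt (fun s => w (s, p.2)) (g p) p.1 := by
    intro p hp
    have hop : S ∈ 𝓝 p := mem_interior_iff_mem_nhds.mp hp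
    have hdw : DifferentiableAt ℝ w p :=
      ((hsmooth.differentiableOn (by simp)) p (interior_subset hp)).differentiableAt hop
    have hline : HasDerivAt (fun s : ℝ => (s, p.2)) ((1:ℝ), (0:ℝ)) p.1 :=
      (hasDerivAt_id p.1).prodMk (hasDerivAt_const p.1 p.2)
    have hcomp := hdw.hasFDerivAt.comp_hasDerivAt p.1 (by simpa using hline)
    have hgval : g p = fderiv ℝ w p (1, 0) := by
      rw [hg_def]; simp only []
      rw [fderivWithin_of_mem_nhds hop]
    rw [hgval]
    exact hcomp
  -- a.e.-measurability of slices
  have hslice : ∀ t ≥ (0:ℝ), ContinuousOn (fun x => w (t, x)) (Set.Icc 0 1) := by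
    intro t ht
    exact hwc.comp ((continuous_const.prodMk continuous_id).continuousOn)
      (fun x hx => by simp [hS_def]; exact ⟨ht, hx.1, hx.2⟩)
  have hmeas : ∀ t ≥ (0:ℝ), AEStronglyMeasurable (fun x => (w (t, x))^2)
      (volume.restrict (Set.uIoc (0:ℝ) 1)) := by
    intro t ht
    rw [Set.uIoc_of_le h01]
    exact (((hslice t ht).pow 2).mono Set.Ioc_subset_Icc_self).aestronglyMeasurable
      measurableSet_Ioc
  set F : ℝ → ℝ := fun t => ∫ x in (0:ℝ)..1, (w (t, x))^2 with hF_def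
  -- continuity of F on [0,∞)
  have hFc : ContinuousOn F (Set.Ici 0) := by
    intro t₀ ht₀
    have hK : IsCompact (Set.Icc 0 (t₀+1) ×ˢ Set.Icc (0:ℝ) 1) :=
      isCompact_Icc.prod isCompact_Icc
    have hKS : Set.Icc 0 (t₀+1) ×ˢ Set.Icc (0:ℝ) 1 ⊆ S := by
      rintro ⟨a, b⟩ ⟨ha, hb⟩
      simp only [hS_def, Set.mem_prod, Set.mem_Ici]
      exact ⟨ha.1, hb⟩
    obtain ⟨M, hM⟩ := hK.exists_bound_of_continuousOn (hwc.mono hKS)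
    have hev1 : ∀ᶠ t in 𝓝[Set.Ici 0] t₀, t ∈ Set.Ici (0:ℝ) :=
      eventually_mem_nhdsWithin
    have hev2 : ∀ᶠ t in 𝓝[Set.Ici 0] t₀, t < t₀ + 1 :=
      (eventually_lt_nhds (lt_add_one t₀)).filter_mono nhdsWithin_le_nhds
    apply intervalIntegral.continuousWithinAt_of_dominated_interval
      (bound := fun _ => M^2)
    · filter_upwards [hev1] with t ht using hmeas t ht
    · filter_upwards [hev1, hev2] with t ht hlt
      apply Eventually.of_forall
      intro x hx
      rw [Set.uIoc_of_le h01] at hx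
      have hk : (t, x) ∈ Set.Icc 0 (t₀+1) ×ˢ Set.Icc (0:ℝ) 1 :=
        ⟨⟨ht, hlt.le⟩, Set.Ioc_subset_Icc_self hx⟩
      calc ‖(w (t, x))^2‖ = ‖w (t, x)‖^2 := by rw [norm_pow]
        _ ≤ M^2 := pow_le_pow_left₀ (norm_nonneg _) (hM _ hk) 2
    · exact intervalIntegrable_const
    · apply Eventually.of_forall
      intro x hx
      rw [Set.uIoc_of_le h01] at hx
      have hxI : x ∈ Set.Icc (0:ℝ) 1 := Set.Ioc_subset_Icc_self hx
      have hmem : (t₀, x) ∈ S := by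
        simp only [hS_def, Set.mem_prod, Set.mem_Ici]; exact ⟨ht₀, hxI⟩
      have hcw : ContinuousWithinAt ((fun p => w p) ∘ (fun t : ℝ => (t, x)))
          (Set.Ici 0) t₀ := by
        apply ContinuousWithinAt.comp_of_eq (hwc (t₀, x) hmem)
          ((continuous_id.prodMk continuous_const).continuousWithinAt)
          (fun t ht => by simp only [hS_def, Set.mem_prod, Set.mem_Ici]; exact ⟨ht, hxI⟩)
          rfl
      exact hcw.pow 2
  -- differentiability of F on (0,∞)
  have hFd : ∀ t : ℝ, 0 < t →
      HasDerivAt F (∫ x in (0:ℝ)..1, 2 * w (t, x) * g (t, x)) t := by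
    intro t₀ ht₀
    have hε : 0 < min (t₀/2) 1 := lt_min (half_pos ht₀) one_pos
    have hK : IsCompact (Set.Icc (t₀/2) (t₀+1) ×ˢ Set.Icc (0:ℝ) 1) :=
      isCompact_Icc.prod isCompact_Icc
    have hKS : Set.Icc (t₀/2) (t₀+1) ×ˢ Set.Icc (0:ℝ) 1 ⊆ S := by
      rintro ⟨a, b⟩ ⟨ha, hb⟩
      simp only [hS_def, Set.mem_prod, Set.mem_Ici]
      exact ⟨le_trans (half_pos ht₀).le ha.1, hb⟩
    have hcont2 : ContinuousOn (fun p => 2 * w p * g p) S :=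
      (continuousOn_const.mul hwc).mul hgc
    obtain ⟨M, hM⟩ := hK.exists_bound_of_continuousOn (hcont2.mono hKS)
    have hball : ∀ t ∈ Metric.ball t₀ (min (t₀/2) 1), t ∈ Set.Icc (t₀/2) (t₀+1) := by
      intro t ht
      rw [Real.ball_eq_Ioo] at ht
      have h1 := min_le_left (t₀/2) 1
      have h2 := min_le_right (t₀/2) 1
      constructor <;> [linarith [ht.1]; linarith [ht.2]]
    have hae : ∀ᵐ x : ℝ ∂volume, x ≠ 1 := by
      have h0 : (volume : Measure ℝ) {(1:ℝ)} = 0 := measure_singleton 1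
      have := measure_eq_zero_iff_ae_notMem.mp h0
      simpa using this
    have key := intervalIntegral.hasDerivAt_integral_of_dominated_loc_of_deriv_le
      (F := fun t x => (w (t, x))^2) (F' := fun t x => 2 * w (t, x) * g (t, x))
      (bound := fun _ => M) (a := (0:ℝ)) (b := (1:ℝ)) (μ := volume) (x₀ := t₀) (Metric.ball_mem_nhds t₀ hε)
      ?_ ?_ ?_ ?_ ?_ ?_
    · rw [hF_def]; exact key.2
    · filter_upwards [eventually_gt_nhds ht₀] with t ht using hmeas t ht.le
    · exact ContinuousOn.intervalIntegrable_of_Icc h01 ((hslice t₀ ht₀.le).pow 2)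
    · rw [Set.uIoc_of_le h01]
      have hsl : ContinuousOn (fun x => 2 * w (t₀, x) * g (t₀, x)) (Set.Icc 0 1) := by
        apply hcont2.comp ((continuous_const.prodMk continuous_id).continuousOn)
        intro x hx
        simp only [hS_def, Set.mem_prod, Set.mem_Ici]; exact ⟨ht₀.le, hx⟩
      exact (hsl.mono Set.Ioc_subset_Icc_self).aestronglyMeasurable measurableSet_Ioc
    · apply Eventually.of_forall
      intro x hx t ht
      rw [Set.uIoc_of_le h01] at hx
      exact hM _ ⟨hball t ht, Set.Ioc_subset_Icc_self hx⟩
    · exact intervalIntegrable_const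
    · filter_upwards [hae] with x hx1 hxI t ht
      rw [Set.uIoc_of_le h01] at hxI
      have hxo : x ∈ Set.Ioo (0:ℝ) 1 := ⟨hxI.1, lt_of_le_of_ne hxI.2 hx1⟩
      have htpos : 0 < t := lt_of_lt_of_le (half_pos ht₀) (hball t ht).1
      have hp : (t, x) ∈ interior S := by rw [hintS]; exact ⟨htpos, hxo⟩
      have h := (hDA (t, x) hp).pow 2
      refine h.congr_deriv ?_
      push_cast
      ring
  -- energy inequality
  have hineq : ∀ t : ℝ, 0 < t →
      (∫ x in (0:ℝ)..1, 2 * w (t, x) * g (t, x)) ≤ -2 * F t := by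
    intro t ht
    apply slice_ineq
    · exact hsmooth.comp (contDiff_const.prodMk contDiff_id).contDiffOn
        (fun x hx => by simp [hS_def]; exact ⟨ht.le, hx.1, hx.2⟩)
    · intro x hx
      have hp : (t, x) ∈ interior S := by rw [hintS]; exact ⟨ht, hx⟩
      have h1 : deriv (fun s => w (s, x)) t = g (t, x) := (hDA (t, x) hp).deriv
      rw [← h1]
      exact heq t ht.le x (Set.Ioo_subset_Icc_self hx)
    · exact hbc0 t ht.le
    · exact hbc1 t ht.le
  -- Gronwall-type argument
  intro t ht
  set G : ℝ → ℝ := fun s => Real.exp (2*s) * F s with hG_def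
  have hGc : ContinuousOn G (Set.Ici 0) :=
    ((Real.continuous_exp.comp (continuous_const.mul continuous_id)).continuousOn).mul hFc
  have hGd : ∀ s ∈ interior (Set.Ici (0:ℝ)), HasDerivAt G
      (Real.exp (2*s) * (2 * F s + ∫ x in (0:ℝ)..1, 2 * w (s, x) * g (s, x))) s := by
    intro s hs
    rw [interior_Ici] at hs
    have h1 : HasDerivAt (fun s : ℝ => Real.exp (2*s)) (Real.exp (2*s) * 2) s := by
      simpa using ((hasDerivAt_id s).const_mul 2).exp
    have h2 := hFd s hs
    have h3 := h1.mul h2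
    rw [hG_def]
    refine h3.congr_deriv ?_
    ring
  have hanti : AntitoneOn G (Set.Ici 0) := by
    apply antitoneOn_of_deriv_nonpos (convex_Ici 0) hGc
    · intro s hs
      exact ((hGd s hs).differentiableAt).differentiableWithinAt
    · intro s hs
      rw [(hGd s hs).deriv]
      have h := hineq s (by rwa [interior_Ici] at hs)
      have h4 : 2 * F s + (∫ x in (0:ℝ)..1, 2 * w (s, x) * g (s, x)) ≤ 0 := by linarith
      exact mul_nonpos_of_nonneg_of_nonpos (Real.exp_pos _).le h4
  have hle : G t ≤ G 0 := hanti (Set.self_mem_Ici) ht ht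
  have hG0 : G 0 = F 0 := by rw [hG_def]; simp
  have hfinal : Real.exp (2*t) * F t ≤ F 0 := by
    rw [hG_def] at hle
    simpa using hle
  calc F t = Real.exp (-2*t) * (Real.exp (2*t) * F t) := by
        rw [← mul_assoc, ← Real.exp_add]; norm_num
    _ ≤ Real.exp (-2*t) * F 0 :=
        mul_le_mul_of_nonneg_left hfinal (Real.exp_pos _).le
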